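/- Let X be a dense linear subspace of ℓ²(S) possessing an orthonormal basis. Then there exists a partition 𝒫 of S into countable sets such that the linear span of ⋃_{A∈𝒫} X↓A is dense in X; i.e., X is the (closure within X of the) orthogonal direct sum of the subspaces X↓A, A ∈ 𝒫. -/

import Mathlib

noncomputable section
open scoped InnerProductSpace ENNReal

/-- An orthonormal subset of an inner product space. -/
def OrthSet (k : Type*) {E : Type*} [RCLike k] [NormedAddCommGroup E]
    [InnerProductSpace k E] (B : Set E) : Prop :=
  Orthonormal k ((↑) : B → E)

/-- A maximal orthonormal system of the whole space. -/
def MaximalOrthSet (k : Type*) {E : Type*} [RCLike k] [NormedAddCommGroup E]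
    [InnerProductSpace k E] (B : Set E) : Prop :=
  OrthSet k B ∧ ∀ C : Set E, B ⊆ C → OrthSet k C → C = B

/-- An orthonormal basis (as a set): an orthonormal system whose linear span is dense. -/
def IsOrthBasisSet (k : Type*) {E : Type*} [RCLike k] [NormedAddCommGroup E]
    [InnerProductSpace k E] (B : Set E) : Prop :=
  OrthSet k B ∧ Dense (Submodule.span k B : Set E)

/-- The space has an orthonormal basis (is non-pathological). -/
def HasOrthBasis (k E : Type*) [RCLike k] [NormedAddCommGroup E]
    [InnerProductSpace k E] : Prop :=
  ∃ B : Set E, IsOrthBasisSet k B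

/-- Density: least cardinality of a dense subset. -/
def densityCard (E : Type*) [TopologicalSpace E] : Cardinal :=
  sInf { c | ∃ D : Set E, Dense D ∧ Cardinal.mk D = c }

/-- A maximal orthonormal system of a subspace `X`. -/
def MaximalOrthIn (k : Type*) {E : Type*} [RCLike k] [NormedAddCommGroup E]
    [InnerProductSpace k E] (X : Submodule k E) (B : Set E) : Prop :=
  B ⊆ X ∧ OrthSet k B ∧ ∀ C : Set E, C ⊆ X → B ⊆ C → OrthSet k C → C = B

/-- An orthonormal basis of the subspace `X`: an orthonormal subset of `X`
whose linear span is dense in `X`. -/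
def IsOrthBasisOf (k : Type*) {E : Type*} [RCLike k] [NormedAddCommGroup E]
    [InnerProductSpace k E] (X : Submodule k E) (B : Set E) : Prop :=
  B ⊆ X ∧ OrthSet k B ∧ (X : Set E) ⊆ closure (Submodule.span k B : Set E)

/-- `X₀` is an orthogonal direct summand of `X`. -/
def IsOrthSummand (k : Type*) {E : Type*} [RCLike k] [NormedAddCommGroup E]
    [InnerProductSpace k E] (X X₀ : Submodule k E) : Prop :=
  ∃ X'' : Submodule k E, X'' ≤ X ∧ (∀ u ∈ X₀, ∀ v ∈ X'', (inner k u v : k) = 0) ∧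
    X₀ ⊔ X'' = X

/-- The closed subspace of `ℓ²(S)` of vectors with support contained in `A`. -/
def lpRes (k : Type*) {S : Type*} [RCLike k] (A : Set S) :
    Submodule k (lp (fun _ : S => k) 2) where
  carrier := {u | ∀ s ∉ A, u s = 0}
  zero_mem' := by intro s _; simp
  add_mem' := by intro a b ha hb s hs; simp [lp.coeFn_add, ha s hs, hb s hs]
  smul_mem' := by intro c a ha s hs; simp [lp.coeFn_smul, ha s hs]

/-- The truncation `u↓A` of `u ∈ ℓ²(S)` to a subset `A ⊆ S`. -/
def lpTrunc {k : Type*} {S : Type*} [RCLike k] (u : lp (fun _ : S => k) 2) (A : Set S) :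
    lp (fun _ : S => k) 2 :=
  ⟨A.indicator ⇑u, by
    refine memℓp_gen ?_
    have hs : Summable fun s => ‖u s‖ ^ (2 : ℝ≥0∞).toReal :=
      (memℓp_gen_iff (by norm_num)).1 (lp.memℓp u)
    refine hs.of_nonneg_of_le (fun s => by positivity) (fun s => ?_)
    by_cases hsA : s ∈ A
    · simp [Set.indicator, hsA]
    · simp only [Set.indicator, hsA, if_false, norm_zero]
      rw [Real.zero_rpow (by norm_num)]
      positivity⟩

lemma countable_reflTransGen {α : Type*} (R : α → α → Prop)
    (h : ∀ a, {b | R a b}.Countable) (s : α) :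
    {t | Relation.ReflTransGen R s t}.Countable := by
  let f : ℕ → Set α := fun n => Nat.rec {s} (fun _ C => C ∪ ⋃ a ∈ C, {b | R a b}) n
  have hf : ∀ n, (f n).Countable := by
    intro n
    induction n with
    | zero => exact Set.countable_singleton s
    | succ n ih => exact ih.union (ih.biUnion fun a _ => h a)
  have hsub : {t | Relation.ReflTransGen R s t} ⊆ ⋃ n, f n := by
    intro t ht
    induction ht with
    | refl => exact Set.mem_iUnion.2 ⟨0, rfl⟩
    | tail _ hR ih =>
      rename_i b c _
      obtain ⟨n, hb⟩ := Set.mem_iUnion.1 ih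
      exact Set.mem_iUnion.2 ⟨n + 1, Or.inr (Set.mem_biUnion hb hR)⟩
  exact (Set.countable_iUnion hf).mono hsub

lemma lp_countable_support {k : Type*} [RCLike k] {S : Type*}
    (b : lp (fun _ : S => k) 2) : {s | b s ≠ 0}.Countable := by
  have hs : Summable fun s => ‖b s‖ ^ (2 : ℝ≥0∞).toReal :=
    (memℓp_gen_iff (by norm_num)).1 (lp.memℓp b)
  refine hs.countable_support.mono ?_
  intro s hsne
  simp only [Function.mem_support]
  exact (Real.rpow_pos_of_pos (norm_pos_iff.2 hsne) _).ne'

lemma bessel_fiber_countable {k : Type*} [RCLike k] {S : Type*}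
    {ℬ : Set (lp (fun _ : S => k) 2)}
    (horth : Orthonormal k ((↑) : ℬ → lp (fun _ : S => k) 2)) (s : S) :
    {b ∈ ℬ | b s ≠ 0}.Countable := by
  classical
  have hsum : Summable fun i : ℬ =>
      ‖(inner k ((i : lp (fun _ : S => k) 2)) (lp.single 2 s (1 : k)) : k)‖ ^ 2 :=
    Orthonormal.inner_products_summable _ horth
  have hcnt : {i : ℬ | (i : lp (fun _ : S => k) 2) s ≠ 0}.Countable := by
    refine hsum.countable_support.mono ?_
    intro i hi
    simp only [Function.mem_support]
    rw [lp.inner_single_right]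
    intro h
    apply hi
    have h0 : ‖(inner k ((i : lp (fun _ : S => k) 2) s) (1 : k) : k)‖ = 0 := by
      nlinarith [norm_nonneg (inner k ((i : lp (fun _ : S => k) 2) s) (1 : k) : k)]
    simpa [RCLike.inner_apply] using h0
  have heq : {b ∈ ℬ | b s ≠ 0}
      = ((↑) : ℬ → _) '' {i : ℬ | (i : lp (fun _ : S => k) 2) s ≠ 0} := by
    ext b
    constructor
    · rintro ⟨hb, hbs⟩; exact ⟨⟨b, hb⟩, hbs, rfl⟩
    · rintro ⟨i, hi, rfl⟩; exact ⟨i.2, hi⟩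
  rw [heq]
  exact hcnt.image _

/-- a dense subspace `X` of `ℓ²(S)` with an orthonormal basis decomposes
along a partition of `S` into countable sets. -/
theorem stmt15 {k : Type*} [RCLike k] {S : Type*}
    (X : Submodule k (lp (fun _ : S => k) 2))
    (hX : Dense (X : Set (lp (fun _ : S => k) 2)))
    (hONB : ∃ ℬ, IsOrthBasisOf k X ℬ) :
    ∃ Part : Set (Set S),
      (∀ A ∈ Part, A.Countable) ∧
      (⋃₀ Part) = Set.univ ∧
      (Part.Pairwise Disjoint) ∧
      (X : Set (lp (fun _ : S => k) 2)) ⊆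
        closure ((⨆ A ∈ Part, X ⊓ lpRes k A : Submodule k (lp (fun _ : S => k) 2)) :
          Set (lp (fun _ : S => k) 2)) := by
  classical
  obtain ⟨ℬ, hBX, horth, hdense⟩ := hONB
  let R : S → S → Prop := fun s t => ∃ b ∈ ℬ, b s ≠ 0 ∧ b t ≠ 0
  have hRsymm : Symmetric R := fun s t ⟨b, hb, hs, ht⟩ => ⟨b, hb, ht, hs⟩
  have hsymm : Symmetric (Relation.ReflTransGen R) :=
    fun a b h => by
      induction h with
      | refl => exact Relation.ReflTransGen.refl
      | tail _ hR ih => exact Relation.ReflTransGen.head (hRsymm hR) ih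
  let cls : S → Set S := fun s => {t | Relation.ReflTransGen R s t}
  have hclseq : ∀ s t, Relation.ReflTransGen R s t → cls s = cls t := by
    intro s t hst
    ext u
    exact ⟨fun hsu => (hsymm hst).trans hsu, fun htu => hst.trans htu⟩
  refine ⟨Set.range cls, ?_, ?_, ?_, ?_⟩
  · rintro A ⟨s, rfl⟩
    refine countable_reflTransGen R (fun a => ?_) s
    have hsub : {b | R a b} ⊆ ⋃ u ∈ {b ∈ ℬ | b a ≠ 0}, {t | u t ≠ 0} := by
      rintro t ⟨b, hb, has, hts⟩
      exact Set.mem_biUnion ⟨hb, has⟩ hts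
    exact (((bessel_fiber_countable horth a).biUnion
      fun u _ => lp_countable_support u).mono hsub)
  · ext s
    simp only [Set.mem_sUnion, Set.mem_univ, iff_true]
    exact ⟨cls s, ⟨s, rfl⟩, Relation.ReflTransGen.refl⟩
  · rintro A ⟨s, rfl⟩ B ⟨t, rfl⟩ hne
    refine Set.disjoint_left.2 fun u hsu htu => hne ?_
    rw [hclseq s u hsu, hclseq t u htu]
  · intro x hx
    have hspan : Submodule.span k ℬ ≤ ⨆ A ∈ Set.range cls, X ⊓ lpRes k A := by
      rw [Submodule.span_le]
      intro b hb
      by_cases hbz : ∃ s, b s ≠ 0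
      · obtain ⟨s₀, hs₀⟩ := hbz
        have hbmem : b ∈ X ⊓ lpRes k (cls s₀) := by
          refine ⟨hBX hb, ?_⟩
          intro t ht
          by_contra hbt
          exact ht (Relation.ReflTransGen.single ⟨b, hb, hs₀, hbt⟩)
        exact Submodule.mem_iSup_of_mem (cls s₀)
          (Submodule.mem_iSup_of_mem ⟨s₀, rfl⟩ hbmem)
      · push_neg at hbz
        have hb0 : b = 0 := lp.ext (funext fun s => by simpa using hbz s)
        simp [hb0]
    exact closure_mono (SetLike.coe_subset_coe.2 hspan) (hdense hx)
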